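/- arXiv:1904.08553 — 3 statements merged into one kernel-verified Lean document; each statement's English description precedes it below -/
import Mathlib

section
/- If a vertex i2 belongs to community C(i), does not share an edge with vertex i, and vertex i (with weighted degree d(i) > 0) leaves community C(i) to join community C(j*), then the modularity gain of moving i2 to C(j*) strictly decreases; specifically, the new gain equals the old gain minus 2·d(i2)·d(i)/(2m)², where d(i2) > 0 is the weighted degree of i2 and m is the total edge weight. -/
open Finset

namespace DynCD

variable {V : Type*} [Fintype V] [DecidableEq V]

/-- Weighted degree of a vertex. -/
noncomputable def deg (w : V → V → ℝ) (v : V) : ℝ := ∑ u, w v u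

/-- Total weight of edges from `v` into the community `C`. -/
noncomputable def eTo (w : V → V → ℝ) (v : V) (C : Finset V) : ℝ := ∑ u ∈ C, w v u

/-- Sum of the weighted degrees of the vertices of `C`. -/
noncomputable def aOf (w : V → V → ℝ) (C : Finset V) : ℝ := ∑ v ∈ C, deg w v

/-- Modularity gain of moving `v` from its community `Cv` to the community `C`:
`ΔQ_{v→C} = (e_{v→C} − e_{v→Cv∖{v}})/(2m) + (d(v)·a_{Cv∖{v}} − d(v)·a_C)/(2m)²`. -/
noncomputable def gain (w : V → V → ℝ) (m : ℝ) (v : V) (Cv C : Finset V) : ℝ :=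
  (eTo w v C - eTo w v (Cv.erase v)) / (2 * m)
    + (deg w v * aOf w (Cv.erase v) - deg w v * aOf w C) / (2 * m) ^ 2

/-- Modularity of the set of communities `P` with community assignment `Cfun`:
`Q = (1/2m)·(Σ_v e_{v→C(v)} − (1/2m)·Σ_{C∈P} a_C²)`. -/
noncomputable def modularity (w : V → V → ℝ) (m : ℝ)
    (P : Finset (Finset V)) (Cfun : V → Finset V) : ℝ :=
  (1 / (2 * m)) * ((∑ v, eTo w v (Cfun v)) - (1 / (2 * m)) * ∑ C ∈ P, (aOf w C) ^ 2)

/-- Total weight of the edges inside `C` (each unordered edge counted once). -/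
noncomputable def inW (w : V → V → ℝ) (C : Finset V) : ℝ :=
  (1 / 2) * ∑ v ∈ C, ∑ u ∈ C, w v u

/-- The new set of communities after moving `v` from community `Cv` to community `C`. -/
def moveP (P : Finset (Finset V)) (Cv C : Finset V) (v : V) : Finset (Finset V) :=
  insert (insert v C) (insert (Cv.erase v) ((P.erase Cv).erase C))

/-- The new community assignment after moving `v` from community `Cv` to community `C`. -/
def moveC (Cfun : V → Finset V) (Cv C : Finset V) (v : V) : V → Finset V :=
  fun u => if u = v then insert v C
    else if Cfun u = Cv then Cv.erase v
    else if Cfun u = C then insert v C else Cfun u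

/-- `(P, Cfun)` forms a partition of the vertex set into communities. -/
def IsPartition (P : Finset (Finset V)) (Cfun : V → Finset V) : Prop :=
  (∀ v : V, Cfun v ∈ P ∧ v ∈ Cfun v) ∧ (∀ C ∈ P, ∀ u ∈ C, Cfun u = C)
/-- Lemma 3.2 (expanded): if `i2 ∈ C(i)`, `i2` not adjacent to `i`, and `i` (with
positive weighted degree) leaves `C(i)` to join `C(j*)`, then the modularity gain of
moving `i2` to `C(j*)` strictly decreases, by exactly `2·d(i2)·d(i)/(2m)²`. -/
theorem stmt0 (w : V → V → ℝ) (m : ℝ) (hm : 0 < m)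
    (i i2 : V) (Ci Cj : Finset V)
    (hiCi : i ∈ Ci) (hi2Ci : i2 ∈ Ci) (hne : i2 ≠ i)
    (hnoedge1 : w i i2 = 0) (hnoedge2 : w i2 i = 0)
    (hiCj : i ∉ Cj)
    (hdi : 0 < deg w i) (hdi2 : 0 < deg w i2) :
    gain w m i2 (Ci.erase i) (insert i Cj)
        = gain w m i2 Ci Cj - 2 * deg w i2 * deg w i / (2 * m) ^ 2 ∧
      gain w m i2 (Ci.erase i) (insert i Cj) < gain w m i2 Ci Cj := by

  have h1 : eTo w i2 (insert i Cj) = eTo w i2 Cj := by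
    simp [eTo, Finset.sum_insert hiCj, hnoedge2]
  have h2 : (Ci.erase i).erase i2 = (Ci.erase i2).erase i := Finset.erase_right_comm
  have h3 : eTo w i2 ((Ci.erase i2).erase i) = eTo w i2 (Ci.erase i2) := by
    rw [eTo, Finset.sum_erase]
    · rfl
    · exact hnoedge2
  have h4 : aOf w ((Ci.erase i2).erase i) = aOf w (Ci.erase i2) - deg w i := by
    have hi' : i ∈ Ci.erase i2 := Finset.mem_erase.2 ⟨fun h => hne h.symm, hiCi⟩
    rw [aOf, Finset.sum_erase_eq_sub hi']; rfl
  have h5 : aOf w (insert i Cj) = deg w i + aOf w Cj := by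
    rw [aOf, Finset.sum_insert hiCj]; rfl
  have key : gain w m i2 (Ci.erase i) (insert i Cj)
      = gain w m i2 Ci Cj - 2 * deg w i2 * deg w i / (2 * m) ^ 2 := by
    simp only [gain, h1, h2, h3, h4, h5]
    ring
  refine ⟨key, ?_⟩
  rw [key]
  have hpos : 0 < 2 * deg w i2 * deg w i / (2 * m) ^ 2 := by positivity
  linarith


end DynCD
end

section
/- If a vertex k belongs to neither C(i) nor C(j*), does not share an edge with vertex i, and vertex i migrates from C(i) to C(j*), then the modularity gain of moving k to C(j*) does not increase; specifically, the new gain equals the old gain minus d(k)·d(i)/(2m)², so if d(k) > 0 and d(i) > 0 the gain strictly decreases. -/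
open Finset

namespace DynCD

variable {V : Type*} [Fintype V] [DecidableEq V]

/-- If `k` belongs to neither `C(i)` nor `C(j*)`, is not adjacent to `i`, and `i`
migrates from `C(i)` to `C(j*)`, then the modularity gain of moving `k` to `C(j*)`
drops by exactly `d(k)·d(i)/(2m)²`; with positive degrees it strictly decreases. -/
theorem stmt1 (w : V → V → ℝ) (m : ℝ) (hm : 0 < m)
    (i k : V) (Ci Cj Ck : Finset V)
    (hiCi : i ∈ Ci) (hiCj : i ∉ Cj)
    (hkCi : k ∉ Ci) (hkCj : k ∉ Cj) (hkCk : k ∈ Ck)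
    (hCkCi : Ck ≠ Ci) (hCkCj : Ck ≠ Cj)
    (hnoedge1 : w k i = 0) (hnoedge2 : w i k = 0) :
    gain w m k Ck (insert i Cj)
        = gain w m k Ck Cj - deg w k * deg w i / (2 * m) ^ 2 ∧
      (0 < deg w k → 0 < deg w i →
        gain w m k Ck (insert i Cj) < gain w m k Ck Cj) := by
  have he : eTo w k (insert i Cj) = eTo w k Cj := by
    simp [eTo, Finset.sum_insert hiCj, hnoedge1]
  have ha : aOf w (insert i Cj) = deg w i + aOf w Cj := by
    simp [aOf, Finset.sum_insert hiCj]
  have hmain : gain w m k Ck (insert i Cj)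
      = gain w m k Ck Cj - deg w k * deg w i / (2 * m) ^ 2 := by
    simp only [gain, he, ha]; ring
  refine ⟨hmain, fun hk hi => ?_⟩
  rw [hmain]
  have : 0 < deg w k * deg w i / (2 * m) ^ 2 := by positivity
  linarith

end DynCD
end

section
/- When vertex i migrates from C(i) to C(j*), for any vertex v adjacent to i with edge weight ω_{vi} > 0, v ∈ C(v) with C(v) ∉ {C(i), C(j*)} (or v ∈ C(i)), the new modularity gain of moving v to C(j*) equals the old gain plus ω_{vi}/(2m) + (terms of order d(v)·d(i)/(2m)²); in particular, if ω_{vi}·(2m) > 2·d(v)·d(i), the gain of v moving to C(j*) strictly increases. -/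
open Finset

namespace DynCD

variable {V : Type*} [Fintype V] [DecidableEq V]

/-- When `i` migrates from `C(i)` to `C(j*)`, for a neighbor `v` of `i` (edge weight
`ω_{vi} > 0`, `v ∉ C(j*)`), the new gain of moving `v` to `C(j*)` equals the old gain
plus `ω_{vi}`-terms minus degree-product terms of order `d(v)·d(i)/(2m)²`; in
particular, if `ω_{vi}·(2m) > 2·d(v)·d(i)` the gain strictly increases. -/
theorem stmt3 (w : V → V → ℝ) (m : ℝ) (hm : 0 < m)
    (hsym : ∀ u v, w u v = w v u) (hnn : ∀ u v, 0 ≤ w u v)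
    (i v : V) (Ci Cj Cv : Finset V)
    (hiCi : i ∈ Ci) (hiCj : i ∉ Cj)
    (hvCv : v ∈ Cv) (hvCj : v ∉ Cj) (hvi : v ≠ i)
    (hiv : Cv = Ci ∨ i ∉ Cv)
    (hadj : 0 < w v i) :
    (Cv = Ci →
      gain w m v (Ci.erase i) (insert i Cj)
        = gain w m v Cv Cj + 2 * w v i / (2 * m)
            - 2 * deg w v * deg w i / (2 * m) ^ 2) ∧
    (Cv ≠ Ci →
      gain w m v Cv (insert i Cj)
        = gain w m v Cv Cj + w v i / (2 * m)
            - deg w v * deg w i / (2 * m) ^ 2) ∧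
    (w v i * (2 * m) > 2 * deg w v * deg w i →
      gain w m v (if Cv = Ci then Ci.erase i else Cv) (insert i Cj)
        > gain w m v Cv Cj) := by

  have hne : (2*m) ≠ 0 := by positivity
  have hdegv : 0 ≤ deg w v := Finset.sum_nonneg fun u _ => hnn v u
  have hdegi : 0 ≤ deg w i := Finset.sum_nonneg fun u _ => hnn i u
  have heIns : eTo w v (insert i Cj) = eTo w v Cj + w v i := by
    simp [eTo, Finset.sum_insert hiCj, add_comm]
  have haIns : aOf w (insert i Cj) = aOf w Cj + deg w i := by
    simp [aOf, Finset.sum_insert hiCj, add_comm]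
  have h1 : Cv = Ci →
      gain w m v (Ci.erase i) (insert i Cj)
        = gain w m v Cv Cj + 2 * w v i / (2 * m)
            - 2 * deg w v * deg w i / (2 * m) ^ 2 := by
    intro h; subst h
    have hiv' : i ∈ Cv.erase v := Finset.mem_erase.2 ⟨fun h => hvi h.symm, hiCi⟩
    have hcomm : (Cv.erase i).erase v = (Cv.erase v).erase i := Finset.erase_right_comm
    have he2 : eTo w v ((Cv.erase i).erase v) = eTo w v (Cv.erase v) - w v i := by
      rw [hcomm]; exact Finset.sum_erase_eq_sub hiv'
    have ha2 : aOf w ((Cv.erase i).erase v) = aOf w (Cv.erase v) - deg w i := by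
      rw [hcomm]; exact Finset.sum_erase_eq_sub hiv'
    rw [gain, gain, heIns, haIns, he2, ha2]; ring
  have h2 : Cv ≠ Ci →
      gain w m v Cv (insert i Cj)
        = gain w m v Cv Cj + w v i / (2 * m)
            - deg w v * deg w i / (2 * m) ^ 2 := by
    intro h
    rw [gain, gain, heIns, haIns]; ring
  refine ⟨h1, h2, ?_⟩
  intro hbig
  have hkey : 0 < w v i / (2*m) - deg w v * deg w i / (2*m)^2 := by
    rw [div_sub_div _ _ hne (pow_ne_zero 2 hne)]
    apply div_pos
    · nlinarith
    · positivity
  by_cases hc : Cv = Ci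
  · rw [if_pos hc, h1 hc]
    have e1 : 2 * w v i / (2*m) - 2 * deg w v * deg w i / (2*m)^2
        = 2 * (w v i / (2*m) - deg w v * deg w i / (2*m)^2) := by ring
    linarith
  · rw [if_neg hc, h2 hc]
    have e1 : w v i / (2*m) - deg w v * deg w i / (2*m)^2
        = (w v i / (2*m) - deg w v * deg w i / (2*m)^2) := rfl
    linarith


end DynCD
end
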